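/- Every connected bipartite graph G with vertex bipartition X ∪ Y having at least two edges, which is not a star centered at a vertex of Y, has a subgraph H covering Y (i.e., every vertex of Y has degree at least 1 in H) such that every connected component of H is either a star with at least two edges centered at a vertex of X, or a subdivided star with at least four edges centered at a vertex of Y. -/

import Mathlib

open SimpleGraph

/-- The closed neighbourhood of an edge `e`: all edges of `G` sharing a vertex with `e`. -/
def ECN {V : Type*} (G : SimpleGraph V) (e : Sym2 V) : Set (Sym2 V) :=
  {f | f ∈ G.edgeSet ∧ ∃ w, w ∈ f ∧ w ∈ e}

/-- The open neighbourhood of an edge `e`. -/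
def EON {V : Type*} (G : SimpleGraph V) (e : Sym2 V) : Set (Sym2 V) :=
  ECN G e \ {e}

/-- `c` is a closed conflict-free edge colouring of `G` with `k` colours. -/
def ClosedCF {V : Type*} (G : SimpleGraph V) (c : Sym2 V → ℕ) (k : ℕ) : Prop :=
  (∀ e ∈ G.edgeSet, c e < k) ∧
  ∀ e ∈ G.edgeSet, ∃ α, ∃! f, f ∈ ECN G e ∧ c f = α

/-- `c` is an open conflict-free edge colouring of `G` with `k` colours. -/
def OpenCF {V : Type*} (G : SimpleGraph V) (c : Sym2 V → ℕ) (k : ℕ) : Prop :=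
  (∀ e ∈ G.edgeSet, c e < k) ∧
  ∀ e ∈ G.edgeSet, (EON G e).Nonempty → ∃ α, ∃! f, f ∈ EON G e ∧ c f = α

/-- `c` is a conflict-free edge colouring of `G` with `k` colours:
every non-isolated edge `e` has an edge `e'` in its open neighbourhood whose
colour appears on no other edge of the closed neighbourhood of `e`. -/
def ConflictFree {V : Type*} (G : SimpleGraph V) (c : Sym2 V → ℕ) (k : ℕ) : Prop :=
  (∀ e ∈ G.edgeSet, c e < k) ∧
  ∀ e ∈ G.edgeSet, (EON G e).Nonempty →
    ∃ e' ∈ EON G e, ∀ f ∈ ECN G e, c f = c e' → f = e'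

/-- A partial edge colouring of `G` with `k` colours. -/
def PartialColouring {V : Type*} (G : SimpleGraph V) (c : Sym2 V → Option ℕ) (k : ℕ) : Prop :=
  ∀ e α, c e = some α → e ∈ G.edgeSet ∧ α < k

/-- An edge `e` is satisfied by the partial colouring `c`. -/
def SatisfiedP {V : Type*} (G : SimpleGraph V) (c : Sym2 V → Option ℕ) (e : Sym2 V) : Prop :=
  ∃ e' ∈ EON G e, ∃ α, c e' = some α ∧ ∀ f ∈ ECN G e, c f = some α → f = e'

/-- Vertex `v` is incident with a uniquely coloured edge under partial colouring `c`. -/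
def UniqueAt {V : Type*} (G : SimpleGraph V) (c : Sym2 V → Option ℕ) (v : V) : Prop :=
  ∃ e ∈ G.incidenceSet v, ∃ α, c e = some α ∧
    ∀ f ∈ G.incidenceSet v, c f = some α → f = e

/-- `G` is `k`-degenerate: there is a vertex ordering in which every vertex
has at most `k` earlier neighbours. -/
def IsDegenerate {V : Type*} (G : SimpleGraph V) (k : ℕ) : Prop :=
  ∃ f : V ↪ ℕ, ∀ v, {u ∈ G.neighborSet v | f u < f v}.ncard ≤ k

/-- The open conflict-free chromatic index. -/
noncomputable def ocfIndex {V : Type*} (G : SimpleGraph V) : ℕ :=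
  sInf {k | ∃ c, OpenCF G c k}

/-- The closed conflict-free chromatic index. -/
noncomputable def ccfIndex {V : Type*} (G : SimpleGraph V) : ℕ :=
  sInf {k | ∃ c, ClosedCF G c k}

/-- The conflict-free chromatic index. -/
noncomputable def cfIndex {V : Type*} (G : SimpleGraph V) : ℕ :=
  sInf {k | ∃ c, ConflictFree G c k}

/-- The connected component (with vertex set `s`) of `H` containing `x` is a
nontrivial star centered at `x`. -/
def IsNontrivialStarComp {V : Type*} (H : SimpleGraph V) (s : Set V) (x : V) : Prop :=
  x ∈ s ∧ 2 ≤ (H.neighborSet x).ncard ∧ ∀ v ∈ s, v ≠ x → H.neighborSet v = {x}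

/-- The connected component (with vertex set `s`) of `H` containing `y` is a
nontrivial subdivided star centered at `y`. -/
def IsNontrivialSubdividedStarComp {V : Type*} (H : SimpleGraph V) (s : Set V) (y : V) : Prop :=
  y ∈ s ∧ 2 ≤ (H.neighborSet y).ncard ∧
  (∀ u, H.Adj y u → ∃ l, l ≠ y ∧ H.neighborSet u = {y, l} ∧ H.neighborSet l = {u}) ∧
  ∀ v ∈ s, v = y ∨ H.Adj y v ∨ ∃ u, H.Adj y u ∧ H.Adj u v

section AuxA
variable {V : Type*}

/-- `H` looks locally like a nontrivial star centered at `x`. -/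
def StarAt (H : SimpleGraph V) (x : V) : Prop :=
  2 ≤ (H.neighborSet x).ncard ∧ ∀ v, H.Adj x v → H.neighborSet v = {x}

/-- `H` looks locally like a nontrivial subdivided star centered at `y`. -/
def SubdivAt (H : SimpleGraph V) (y : V) : Prop :=
  2 ≤ (H.neighborSet y).ncard ∧
  ∀ u, H.Adj y u → ∃ l, l ≠ y ∧ H.neighborSet u = {y, l} ∧ H.neighborSet l = {u}

/-- Every non-isolated vertex of `H` lies near a star or subdivided-star center. -/
def Pgood (H : SimpleGraph V) (X Y : Set V) : Prop :=
  ∀ v, (H.neighborSet v).Nonempty →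
    (∃ x ∈ X, StarAt H x ∧ (v = x ∨ H.Adj x v)) ∨
    (∃ y ∈ Y, SubdivAt H y ∧ (v = y ∨ H.Adj y v ∨ ∃ u, H.Adj y u ∧ H.Adj u v))

lemma walk_mem_closed {H : SimpleGraph V} {A : Set V}
    (hA : ∀ c ∈ A, ∀ d, H.Adj c d → d ∈ A) :
    ∀ {a b : V}, H.Walk a b → a ∈ A → b ∈ A := by
  intro a b p
  induction p with
  | nil => exact fun h => h
  | cons h p ih => intro ha; exact ih (hA _ ha _ h)

lemma reachable_mem_closed {H : SimpleGraph V} {A : Set V}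
    (hA : ∀ c ∈ A, ∀ d, H.Adj c d → d ∈ A) {a b : V} (h : H.Reachable a b)
    (ha : a ∈ A) : b ∈ A := by
  obtain ⟨p⟩ := h
  exact walk_mem_closed hA p ha

lemma pgood_components {H : SimpleGraph V} {X Y : Set V} (hP : Pgood H X Y) :
    ∀ C : H.ConnectedComponent, (∃ v ∈ C.supp, (H.neighborSet v).Nonempty) →
      (∃ x ∈ X, IsNontrivialStarComp H C.supp x) ∨
      (∃ y ∈ Y, IsNontrivialSubdividedStarComp H C.supp y) := by
  intro C ⟨v, hvC, hvne⟩
  rcases hP v hvne with ⟨x, hxX, ⟨hcard, hleaf⟩, hvx⟩ | ⟨y, hyY, ⟨hcard, hbr⟩, hvy⟩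
  · -- star case
    left
    have hreach : H.Reachable x v := by
      rcases hvx with rfl | h
      · exact Reachable.refl _
      · exact h.reachable
    have hxC : x ∈ C.supp := by
      rw [ConnectedComponent.mem_supp_iff] at hvC ⊢
      rw [← hvC]
      exact ConnectedComponent.sound hreach
    set A : Set V := insert x (H.neighborSet x) with hAdef
    have hclosed : ∀ c ∈ A, ∀ d, H.Adj c d → d ∈ A := by
      intro c hc d hcd
      rcases hc with rfl | hc
      · exact Or.inr hcd
      · have := hleaf c hc
        have : d ∈ H.neighborSet c := hcd
        rw [hleaf c hc] at this
        exact Or.inl this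
    have hsupp : ∀ w ∈ C.supp, w ∈ A := by
      intro w hw
      rw [ConnectedComponent.mem_supp_iff] at hw hxC
      have : H.Reachable x w := ConnectedComponent.exact (hxC.trans hw.symm)
      exact reachable_mem_closed hclosed this (Or.inl rfl)
    refine ⟨x, hxX, hxC, hcard, ?_⟩
    intro w hw hwx
    rcases hsupp w hw with rfl | hw'
    · exact absurd rfl hwx
    · exact hleaf w hw'
  · -- subdivided star case
    right
    have hreach : H.Reachable y v := by
      rcases hvy with rfl | h | ⟨u, h1, h2⟩
      · exact Reachable.refl _
      · exact h.reachable
      · exact h1.reachable.trans h2.reachable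
    have hyC : y ∈ C.supp := by
      rw [ConnectedComponent.mem_supp_iff] at hvC ⊢
      rw [← hvC]
      exact ConnectedComponent.sound hreach
    set A : Set V := {w | w = y ∨ H.Adj y w ∨ ∃ u, H.Adj y u ∧ H.Adj u w} with hAdef
    have hclosed : ∀ c ∈ A, ∀ d, H.Adj c d → d ∈ A := by
      intro c hc d hcd
      rcases hc with rfl | hc | ⟨u, hyu, huc⟩
      · exact Or.inr (Or.inl hcd)
      · obtain ⟨l, hly, hNu, hNl⟩ := hbr c hc
        have hd : d ∈ H.neighborSet c := hcd
        rw [hNu] at hd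
        rcases hd with rfl | rfl
        · exact Or.inl rfl
        · exact Or.inr (Or.inr ⟨c, hc, by rw [← SimpleGraph.mem_neighborSet, hNu]; exact Or.inr rfl⟩)
      · obtain ⟨l, hly, hNu, hNl⟩ := hbr u hyu
        have hc' : c ∈ H.neighborSet u := huc
        rw [hNu] at hc'
        rcases hc' with rfl | rfl
        · exact Or.inr (Or.inl hcd)
        · have : d ∈ H.neighborSet c := hcd
          rw [hNl] at this
          rcases this with rfl
          exact Or.inr (Or.inl hyu)
    have hsupp : ∀ w ∈ C.supp, w ∈ A := by
      intro w hw
      rw [ConnectedComponent.mem_supp_iff] at hw hyC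
      have : H.Reachable y w := ConnectedComponent.exact (hyC.trans hw.symm)
      exact reachable_mem_closed hclosed this (Or.inl rfl)
    exact ⟨y, hyY, hyC, hcard, hbr, hsupp⟩

end AuxA

section AuxB
variable {V : Type*}

/-- star with center `x` and leaf set `L` -/
def starG (x : V) (L : Set V) : SimpleGraph V where
  Adj a b := a ≠ b ∧ ((a = x ∧ b ∈ L) ∨ (b = x ∧ a ∈ L))
  symm := ⟨by intro a b ⟨h1, h2⟩; exact ⟨h1.symm, h2.symm⟩⟩
  loopless := ⟨by intro a ⟨h1, _⟩; exact h1 rfl⟩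

variable {x : V} {L : Set V}

lemma starG_adj {a b : V} :
    (starG x L).Adj a b ↔ a ≠ b ∧ ((a = x ∧ b ∈ L) ∨ (b = x ∧ a ∈ L)) := Iff.rfl

lemma starG_nbhd_center (hx : x ∉ L) : (starG x L).neighborSet x = L := by
  ext b
  rw [SimpleGraph.mem_neighborSet, starG_adj]
  constructor
  · rintro ⟨hne, ⟨_, hb⟩ | ⟨hb, hx'⟩⟩
    · exact hb
    · exact absurd hx' hx
  · intro hb
    exact ⟨fun h => hx (h ▸ hb), Or.inl ⟨rfl, hb⟩⟩

lemma starG_nbhd_leaf (hx : x ∉ L) {l : V} (hl : l ∈ L) :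
    (starG x L).neighborSet l = {x} := by
  ext b
  rw [SimpleGraph.mem_neighborSet, starG_adj, Set.mem_singleton_iff]
  constructor
  · rintro ⟨hne, ⟨hlx, _⟩ | ⟨hb, _⟩⟩
    · exact absurd (hlx ▸ hl) hx
    · exact hb
  · rintro rfl
    exact ⟨fun h => hx (h ▸ hl), Or.inr ⟨rfl, hl⟩⟩

lemma starG_nbhd_other {v : V} (hvx : v ≠ x) (hvL : v ∉ L) :
    (starG x L).neighborSet v = ∅ := by
  ext b
  rw [SimpleGraph.mem_neighborSet, starG_adj]
  simp only [Set.mem_empty_iff_false, iff_false]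
  rintro ⟨hne, ⟨hvx', _⟩ | ⟨_, hv⟩⟩
  · exact hvx hvx'
  · exact hvL hv

lemma starG_support {v : V} (hv : ((starG x L).neighborSet v).Nonempty) :
    v = x ∨ v ∈ L := by
  by_contra hc
  push_neg at hc
  rw [starG_nbhd_other hc.1 hc.2] at hv
  exact Set.not_nonempty_empty hv

lemma starG_starAt (hx : x ∉ L) (hL : 2 ≤ L.ncard) : StarAt (starG x L) x := by
  refine ⟨by rw [starG_nbhd_center hx]; exact hL, ?_⟩
  intro v hv
  have hvL : v ∈ L := by rw [← starG_nbhd_center hx]; exact hv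
  exact starG_nbhd_leaf hx hvL

lemma starG_pgood {X Y : Set V} (hx : x ∉ L) (hL : 2 ≤ L.ncard) (hxX : x ∈ X) :
    Pgood (starG x L) X Y := by
  intro v hv
  left
  refine ⟨x, hxX, starG_starAt hx hL, ?_⟩
  rcases starG_support hv with rfl | hvL
  · exact Or.inl rfl
  · have hvx : v ≠ x := fun h => hx (h ▸ hvL)
    exact Or.inr ⟨fun h => hvx h.symm, Or.inl ⟨rfl, hvL⟩⟩

end AuxB

section AuxC
variable {V : Type*}

/-- subdivided star: center `y`, middle vertices `B`, leaf of `u ∈ B` is `lf u` -/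
def subdivG (y : V) (B : Set V) (lf : V → V) : SimpleGraph V where
  Adj a b := a ≠ b ∧ ((a = y ∧ b ∈ B) ∨ (b = y ∧ a ∈ B) ∨
    (a ∈ B ∧ b = lf a) ∨ (b ∈ B ∧ a = lf b))
  symm := ⟨by intro a b ⟨h1, h2⟩; refine ⟨h1.symm, ?_⟩; tauto⟩
  loopless := ⟨by intro a ⟨h1, _⟩; exact h1 rfl⟩

variable {y : V} {B : Set V} {lf : V → V}

/-- Bundle of side conditions. -/
structure SubdivOK (y : V) (B : Set V) (lf : V → V) : Prop where
  hyB : y ∉ B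
  hlfB : ∀ u ∈ B, lf u ∉ B
  hlfy : ∀ u ∈ B, lf u ≠ y
  hlfu : ∀ u ∈ B, lf u ≠ u
  hinj : ∀ u ∈ B, ∀ u' ∈ B, lf u = lf u' → u = u'

lemma subdivG_adj {a b : V} :
    (subdivG y B lf).Adj a b ↔ a ≠ b ∧ ((a = y ∧ b ∈ B) ∨ (b = y ∧ a ∈ B) ∨
    (a ∈ B ∧ b = lf a) ∨ (b ∈ B ∧ a = lf b)) := Iff.rfl

lemma subdivG_nbhd_center (h : SubdivOK y B lf) :
    (subdivG y B lf).neighborSet y = B := by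
  ext b
  rw [SimpleGraph.mem_neighborSet, subdivG_adj]
  constructor
  · rintro ⟨hne, ⟨_, hb⟩ | ⟨_, hy⟩ | ⟨hy, _⟩ | ⟨hb, hy⟩⟩
    · exact hb
    · exact absurd hy h.hyB
    · exact absurd hy h.hyB
    · exact absurd hy.symm (h.hlfy b hb)
  · intro hb
    exact ⟨fun hh => h.hyB (hh ▸ hb), Or.inl ⟨rfl, hb⟩⟩

lemma subdivG_nbhd_mid (h : SubdivOK y B lf) {u : V} (hu : u ∈ B) :
    (subdivG y B lf).neighborSet u = {y, lf u} := by
  ext b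
  rw [SimpleGraph.mem_neighborSet, subdivG_adj]
  simp only [Set.mem_insert_iff, Set.mem_singleton_iff]
  constructor
  · rintro ⟨hne, ⟨hy, _⟩ | ⟨hb, _⟩ | ⟨_, hb⟩ | ⟨hb, hlfb⟩⟩
    · exact absurd (hy ▸ hu) h.hyB
    · exact Or.inl hb
    · exact Or.inr hb
    · exact absurd (hlfb ▸ hu) (h.hlfB b hb)
  · rintro (rfl | rfl)
    · exact ⟨fun hh => h.hyB (hh ▸ hu), Or.inr (Or.inl ⟨rfl, hu⟩)⟩
    · exact ⟨fun hh => h.hlfu u hu hh.symm, Or.inr (Or.inr (Or.inl ⟨hu, rfl⟩))⟩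
lemma subdivG_nbhd_leaf (h : SubdivOK y B lf) {u : V} (hu : u ∈ B) :
    (subdivG y B lf).neighborSet (lf u) = {u} := by
  ext b
  rw [SimpleGraph.mem_neighborSet, subdivG_adj, Set.mem_singleton_iff]
  constructor
  · rintro ⟨hne, ⟨hy, _⟩ | ⟨_, hB⟩ | ⟨hB, _⟩ | ⟨hb, hlfb⟩⟩
    · exact absurd hy (h.hlfy u hu)
    · exact absurd hB (h.hlfB u hu)
    · exact absurd hB (h.hlfB u hu)
    · exact (h.hinj b hb u hu hlfb.symm)
  · rintro rfl
    exact ⟨fun hh => h.hlfu _ hu hh, Or.inr (Or.inr (Or.inr ⟨hu, rfl⟩))⟩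

lemma subdivG_nbhd_other (h : SubdivOK y B lf) {v : V} (hvy : v ≠ y) (hvB : v ∉ B)
    (hvlf : ∀ u ∈ B, v ≠ lf u) : (subdivG y B lf).neighborSet v = ∅ := by
  ext b
  rw [SimpleGraph.mem_neighborSet, subdivG_adj]
  simp only [Set.mem_empty_iff_false, iff_false]
  rintro ⟨hne, ⟨hy, _⟩ | ⟨_, hB⟩ | ⟨hB, _⟩ | ⟨hb, hlfb⟩⟩
  · exact hvy hy
  · exact hvB hB
  · exact hvB hB
  · exact hvlf b hb hlfb

lemma subdivG_support (h : SubdivOK y B lf) {v : V}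
    (hv : ((subdivG y B lf).neighborSet v).Nonempty) :
    v = y ∨ v ∈ B ∨ ∃ u ∈ B, v = lf u := by
  by_contra hc
  push_neg at hc
  rw [subdivG_nbhd_other h hc.1 hc.2.1 hc.2.2] at hv
  exact Set.not_nonempty_empty hv

lemma subdivG_subdivAt (h : SubdivOK y B lf) (hB : 2 ≤ B.ncard) :
    SubdivAt (subdivG y B lf) y := by
  refine ⟨by rw [subdivG_nbhd_center h]; exact hB, ?_⟩
  intro u hu
  have huB : u ∈ B := by rw [← subdivG_nbhd_center h]; exact hu
  exact ⟨lf u, h.hlfy u huB, subdivG_nbhd_mid h huB, subdivG_nbhd_leaf h huB⟩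

lemma subdivG_pgood {X Y : Set V} (h : SubdivOK y B lf) (hB : 2 ≤ B.ncard) (hyY : y ∈ Y) :
    Pgood (subdivG y B lf) X Y := by
  intro v hv
  right
  refine ⟨y, hyY, subdivG_subdivAt h hB, ?_⟩
  rcases subdivG_support h hv with rfl | hvB | ⟨u, hu, rfl⟩
  · exact Or.inl rfl
  · refine Or.inr (Or.inl ?_)
    exact ⟨fun hh => h.hyB (hh ▸ hvB), Or.inl ⟨rfl, hvB⟩⟩
  · refine Or.inr (Or.inr ⟨u, ?_, ?_⟩)
    · exact ⟨fun hh => h.hyB (hh ▸ hu), Or.inl ⟨rfl, hu⟩⟩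
    · exact ⟨fun hh => h.hlfu u hu hh.symm, Or.inr (Or.inr (Or.inl ⟨hu, rfl⟩))⟩

end AuxC

section AuxD
variable {V : Type*}

variable {H₁ H₂ : SimpleGraph V}

lemma nbhd_sup (v : V) :
    (H₁ ⊔ H₂).neighborSet v = H₁.neighborSet v ∪ H₂.neighborSet v := by
  ext b; simp [SimpleGraph.mem_neighborSet]

variable (hdisj : ∀ v, (H₁.neighborSet v).Nonempty → (H₂.neighborSet v).Nonempty → False)

include hdisj

lemma nbhd_sup_left {v : V} (h : (H₁.neighborSet v).Nonempty) :
    (H₁ ⊔ H₂).neighborSet v = H₁.neighborSet v := by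
  rw [nbhd_sup]
  have : H₂.neighborSet v = ∅ := by
    by_contra hc
    exact hdisj v h (Set.nonempty_iff_ne_empty.2 hc)
  rw [this, Set.union_empty]

lemma starAt_sup_left {x : V} (h : StarAt H₁ x) : StarAt (H₁ ⊔ H₂) x := by
  obtain ⟨hcard, hleaf⟩ := h
  have hxne : (H₁.neighborSet x).Nonempty :=
    Set.nonempty_of_ncard_ne_zero (by omega)
  have hNx := nbhd_sup_left hdisj hxne
  refine ⟨by rw [hNx]; exact hcard, ?_⟩
  intro v hv
  have hv1 : H₁.Adj x v := by
    have : v ∈ (H₁ ⊔ H₂).neighborSet x := hv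
    rw [hNx] at this; exact this
  have hvne : (H₁.neighborSet v).Nonempty := ⟨x, hv1.symm⟩
  rw [nbhd_sup_left hdisj hvne]
  exact hleaf v hv1

lemma subdivAt_sup_left {y : V} (h : SubdivAt H₁ y) : SubdivAt (H₁ ⊔ H₂) y := by
  obtain ⟨hcard, hbr⟩ := h
  have hyne : (H₁.neighborSet y).Nonempty :=
    Set.nonempty_of_ncard_ne_zero (by omega)
  have hNy := nbhd_sup_left hdisj hyne
  refine ⟨by rw [hNy]; exact hcard, ?_⟩
  intro u hu
  have hu1 : H₁.Adj y u := by
    have : u ∈ (H₁ ⊔ H₂).neighborSet y := hu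
    rw [hNy] at this; exact this
  obtain ⟨l, hly, hNu, hNl⟩ := hbr u hu1
  have hune : (H₁.neighborSet u).Nonempty := ⟨y, hu1.symm⟩
  have hlne : (H₁.neighborSet l).Nonempty := by
    refine ⟨u, ?_⟩
    rw [hNl]; rfl
  exact ⟨l, hly, by rw [nbhd_sup_left hdisj hune]; exact hNu,
    by rw [nbhd_sup_left hdisj hlne]; exact hNl⟩

lemma pgood_sup {X Y : Set V} (h₁ : Pgood H₁ X Y) (h₂ : Pgood H₂ X Y) :
    Pgood (H₁ ⊔ H₂) X Y := by
  have hdisj' : ∀ v, (H₂.neighborSet v).Nonempty → (H₁.neighborSet v).Nonempty → False :=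
    fun v a b => hdisj v b a
  intro v hv
  rw [nbhd_sup] at hv
  rcases Set.union_nonempty.1 hv with hv1 | hv2
  · rcases h₁ v hv1 with ⟨x, hxX, hst, hpos⟩ | ⟨y, hyY, hst, hpos⟩
    · refine Or.inl ⟨x, hxX, starAt_sup_left hdisj hst, ?_⟩
      rcases hpos with h | h
      · exact Or.inl h
      · exact Or.inr (((sup_adj _ _ _ _).2 (Or.inl h)))
    · refine Or.inr ⟨y, hyY, subdivAt_sup_left hdisj hst, ?_⟩
      rcases hpos with h | h | ⟨u, h1, h2⟩
      · exact Or.inl h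
      · exact Or.inr (Or.inl (((sup_adj _ _ _ _).2 (Or.inl h))))
      · exact Or.inr (Or.inr ⟨u, ((sup_adj _ _ _ _).2 (Or.inl h1)), ((sup_adj _ _ _ _).2 (Or.inl h2))⟩)
  · rw [sup_comm] at *
    rcases h₂ v hv2 with ⟨x, hxX, hst, hpos⟩ | ⟨y, hyY, hst, hpos⟩
    · refine Or.inl ⟨x, hxX, starAt_sup_left hdisj' hst, ?_⟩
      rcases hpos with h | h
      · exact Or.inl h
      · exact Or.inr (((sup_adj _ _ _ _).2 (Or.inl h)))
    · refine Or.inr ⟨y, hyY, subdivAt_sup_left hdisj' hst, ?_⟩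
      rcases hpos with h | h | ⟨u, h1, h2⟩
      · exact Or.inl h
      · exact Or.inr (Or.inl (((sup_adj _ _ _ _).2 (Or.inl h))))
      · exact Or.inr (Or.inr ⟨u, ((sup_adj _ _ _ _).2 (Or.inl h1)), ((sup_adj _ _ _ _).2 (Or.inl h2))⟩)

end AuxD

section AuxE
universe uV
variable {V : Type uV}

/-- children of `x` within `S` in the BFS tree given by `par` rooted at `r`. -/
def chS (par : V → V) (r : V) (S : Set V) (x : V) : Set V :=
  {w | w ∈ S ∧ w ≠ r ∧ par w = x}

lemma mainInd (G : SimpleGraph V) (X Y : Set V) (r : V) (par : V → V) (d : V → ℕ)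
    (hpart : ∀ v, (v ∈ X ∧ v ∉ Y) ∨ (v ∈ Y ∧ v ∉ X))
    (hbip : ∀ u v, G.Adj u v → (u ∈ X ∧ v ∈ Y) ∨ (u ∈ Y ∧ v ∈ X))
    (hrY : r ∈ Y)
    (hpar : ∀ v, v ≠ r → G.Adj v (par v) ∧ d (par v) + 1 = d v) :
    ∀ n (S : Set V), S.Finite → S.ncard ≤ n → r ∈ S →
    (∀ v ∈ S, v ≠ r → par v ∈ S) →
    (∀ x ∈ S, x ∈ X → (chS par r S x).Nonempty) →
    (∃ y, y ∈ Y ∧ y ∈ S ∧ y ≠ r) →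
    ∃ H : SimpleGraph V,
      (∀ a b, H.Adj a b → G.Adj a b ∧ a ∈ S ∧ b ∈ S) ∧
      (∀ y ∈ Y, y ∈ S → (H.neighborSet y).Nonempty) ∧ Pgood H X Y := by
  have hdisjXY : ∀ v, v ∈ X → v ∈ Y → False := by
    intro v hX hY; rcases hpart v with ⟨_, h⟩ | ⟨_, h⟩; exacts [h hY, h hX]
  have hXorY : ∀ v : V, v ∈ X ∨ v ∈ Y := by
    intro v; rcases hpart v with ⟨h, _⟩ | ⟨h, _⟩; exacts [Or.inl h, Or.inr h]
  have hadjYX : ∀ u v, G.Adj u v → u ∈ X → v ∈ Y := by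
    intro u v h hu; rcases hbip u v h with ⟨_, h2⟩ | ⟨h1, _⟩
    · exact h2
    · exact absurd hu (fun _ => hdisjXY u hu h1)
  have hadjXY : ∀ u v, G.Adj u v → u ∈ Y → v ∈ X := by
    intro u v h hu; rcases hbip u v h with ⟨h1, _⟩ | ⟨_, h2⟩
    · exact absurd h1 (fun hh => hdisjXY u hh hu)
    · exact h2
  intro n
  induction n with
  | zero =>
    intro S hfin hcard hrS _ _ _
    exact absurd hcard (by have := Set.ncard_ne_zero_of_mem hrS hfin; omega)
  | succ n IH =>
    intro S hfin hcard hrS hclosed hsmooth hY2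
    -- basic facts about children
    have hchsub : ∀ x, chS par r S x ⊆ S := fun x w hw => hw.1
    have hchX : ∀ x, x ∈ X → ∀ w ∈ chS par r S x,
        w ∈ Y ∧ G.Adj w x ∧ d w = d x + 1 := by
      intro x hx w hw
      obtain ⟨hwS, hwr, hwp⟩ := hw
      obtain ⟨hadj, hd⟩ := hpar w hwr
      rw [hwp] at hadj hd
      exact ⟨hadjYX x w hadj.symm hx, hadj, by omega⟩
    have hchadj : ∀ x : V, ∀ w ∈ chS par r S x, G.Adj w x ∧ d w = d x + 1 := by
      intro x w hw
      obtain ⟨hwS, hwr, hwp⟩ := hw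
      obtain ⟨h1, h2⟩ := hpar w hwr
      rw [hwp] at h1 h2
      exact ⟨h1, by omega⟩
    have hselfch : ∀ v ∈ S, v ≠ r → v ∈ chS par r S (par v) :=
      fun v hv hvr => ⟨hv, hvr, rfl⟩
    -- X ∩ S nonempty, pick deepest x₀
    obtain ⟨y₁, hy₁Y, hy₁S, hy₁r⟩ := hY2
    have hy₁par := hpar y₁ hy₁r
    have hx₁S : par y₁ ∈ S := hclosed _ hy₁S hy₁r
    have hx₁X : par y₁ ∈ X := hadjXY y₁ _ hy₁par.1 hy₁Y
    obtain ⟨x₀, hx₀mem, hx₀max⟩ := Set.exists_max_image {x | x ∈ S ∧ x ∈ X} d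
      (hfin.subset (fun x hx => hx.1)) ⟨par y₁, hx₁S, hx₁X⟩
    obtain ⟨hx₀S, hx₀X⟩ := hx₀mem
    -- grandchildren of deepest X vertices do not exist
    have F2 : ∀ x, x ∈ S → x ∈ X → d x = d x₀ → ∀ w ∈ chS par r S x,
        chS par r S w = ∅ := by
      intro x hxS hxX hdx w hw
      ext u
      simp only [chS, Set.mem_setOf_eq, Set.mem_empty_iff_false, iff_false]
      rintro ⟨huS, hur, hup⟩
      obtain ⟨hwY, hwadj, hwd⟩ := hchX x hxX w hw
      obtain ⟨huadj, hud⟩ := hpar u hur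
      rw [hup] at huadj hud
      have huX : u ∈ X := hadjXY w u huadj.symm hwY
      have := hx₀max u ⟨huS, huX⟩
      omega
    by_cases hbig : ∃ x, (x ∈ S ∧ x ∈ X ∧ d x = d x₀) ∧ 2 ≤ (chS par r S x).ncard
    · -- CASE I : pendant star removal
      obtain ⟨z, ⟨hzS, hzX, hzd⟩, hch2⟩ := hbig
      have hzr : z ≠ r := fun h => hdisjXY z hzX (h ▸ hrY)
      obtain ⟨hzadj, hzdep⟩ := hpar z hzr
      set yp := par z with hypdef
      have hypS : yp ∈ S := hclosed _ hzS hzr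
      have hypY : yp ∈ Y := hadjYX z yp hzadj hzX
      set L := chS par r S z with hLdef
      have hLY : ∀ w ∈ L, w ∈ Y := fun w hw => (hchX z hzX w hw).1
      have hzL : z ∉ L := fun h => hdisjXY z hzX (hLY z h)
      set R : Set V := insert z L with hRdef
      set S' := S \ R with hS'def
      have hrR : r ∉ R := by
        rintro (h | h)
        · exact hzr h.symm
        · exact h.2.1 rfl
      have hypR : yp ∉ R := by
        rintro (h | h)
        · exact hdisjXY z hzX (h ▸ hypY)
        · obtain ⟨_, hypr, hyppar⟩ := h
          obtain ⟨_, hd2⟩ := hpar yp hypr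
          rw [hyppar] at hd2
          omega
      have hS'closed : ∀ v ∈ S', v ≠ r → par v ∈ S' := by
        intro v hv hvr
        refine ⟨hclosed v hv.1 hvr, ?_⟩
        rintro (h | h)
        · have hvch := hselfch v hv.1 hvr
          rw [h] at hvch
          exact hv.2 (Or.inr hvch)
        · have := F2 z hzS hzX hzd (par v) h
          exact absurd (hselfch v hv.1 hvr) (by rw [this]; simp)
      have hchS' : ∀ x ∈ S', x ∈ X → chS par r S' x = chS par r S x := by
        intro x hx hxX2
        ext w
        simp only [chS, Set.mem_setOf_eq, hS'def, Set.mem_diff]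
        constructor
        · rintro ⟨⟨h1, _⟩, h2, h3⟩; exact ⟨h1, h2, h3⟩
        · rintro ⟨h1, h2, h3⟩
          refine ⟨⟨h1, ?_⟩, h2, h3⟩
          rintro (h | h)
          · rw [h] at h3
            exact hdisjXY x hxX2 (by rw [← h3]; exact hypY)
          · exact hx.2 (Or.inl (h.2.2 ▸ h3).symm)
      have hKedge : ∀ a b, (starG z L).Adj a b → G.Adj a b ∧ a ∈ S ∧ b ∈ S := by
        intro a b hab
        rw [starG_adj] at hab
        rcases hab with ⟨hne, ⟨ha, hb⟩ | ⟨hb2, ha⟩⟩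
        · refine ⟨?_, ?_, hb.1⟩
          · rw [ha]; exact ((hchX z hzX b hb).2.1).symm
          · rw [ha]; exact hzS
        · refine ⟨?_, ha.1, ?_⟩
          · rw [hb2]; exact (hchX z hzX a ha).2.1
          · rw [hb2]; exact hzS
      by_cases hY2' : ∃ y, y ∈ Y ∧ y ∈ S' ∧ y ≠ r
      · -- recurse
        have hS'fin : S'.Finite := hfin.subset (Set.diff_subset)
        have hS'lt : S'.ncard < S.ncard :=
          Set.ncard_lt_ncard ⟨Set.diff_subset, fun hsub =>
            (hsub hzS).2 (Or.inl rfl)⟩ hfin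
        obtain ⟨H', hH'edge, hH'cov, hH'good⟩ := IH S' hS'fin (by omega)
          ⟨hrS, hrR⟩ hS'closed
          (fun x hx hxX2 => by rw [hchS' x hx hxX2]; exact hsmooth x hx.1 hxX2) hY2'
        have hdisj : ∀ v, (H'.neighborSet v).Nonempty →
            ((starG z L).neighborSet v).Nonempty → False := by
          intro v ⟨b, hb⟩ hv2
          have hvS' : v ∈ S' := (hH'edge v b hb).2.1
          rcases starG_support hv2 with rfl | hvL
          · exact hvS'.2 (Or.inl rfl)
          · exact hvS'.2 (Or.inr hvL)
        refine ⟨H' ⊔ starG z L, ?_, ?_, pgood_sup hdisj hH'good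
          (starG_pgood hzL hch2 hzX)⟩
        · intro a b hab
          rcases hab with hab | hab
          · obtain ⟨h1, h2, h3⟩ := hH'edge a b hab
            exact ⟨h1, h2.1, h3.1⟩
          · exact hKedge a b hab
        · intro y hyY hyS
          rw [nbhd_sup]
          by_cases hyR : y ∈ R
          · refine Set.Nonempty.mono Set.subset_union_right ?_
            rcases hyR with h | h
            · exact absurd hyY (fun hh => hdisjXY y (h ▸ hzX) hh)
            · rw [starG_nbhd_leaf hzL h]
              exact ⟨z, rfl⟩
          · exact Set.Nonempty.mono Set.subset_union_left (hH'cov y hyY ⟨hyS, hyR⟩)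
      · -- terminal : S' collapses to {r}
        push_neg at hY2'
        have hcollapse : ∀ v ∈ S', v = r := by
          intro v hv
          rcases hXorY v with hvX | hvY
          · exfalso
            have hne : (chS par r S' v).Nonempty := by
              rw [hchS' v hv hvX]; exact hsmooth v hv.1 hvX
            obtain ⟨w, hwS', hwr, hwpar⟩ := hne
            have hwY : w ∈ Y := (hchX v hvX w ⟨hwS'.1, hwr, hwpar⟩).1
            exact hwr (hY2' w hwY hwS')
          · exact hY2' v hvY hv
        have hypr : yp = r := hcollapse yp ⟨hypS, hypR⟩
        have hzL' : z ∉ insert r L := by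
          rintro (h | h)
          · exact hzr h
          · exact hzL h
        refine ⟨starG z (insert r L), ?_, ?_,
          starG_pgood hzL' (le_trans hch2 (Set.ncard_le_ncard (Set.subset_insert r L)
            ((hfin.subset (hchsub z)).insert r))) hzX⟩
        · intro a b hab
          rw [starG_adj] at hab
          rcases hab with ⟨hne, ⟨rfl, hb⟩ | ⟨rfl, ha⟩⟩
          · rcases hb with rfl | hb
            · exact ⟨hypr ▸ hzadj, hzS, hrS⟩
            · exact ⟨((hchX a hzX b hb).2.1).symm, hzS, hb.1⟩
          · rcases ha with rfl | ha
            · exact ⟨(hypr ▸ hzadj).symm, hrS, hzS⟩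
            · exact ⟨(hchX b hzX a ha).2.1, ha.1, hzS⟩
        · intro y hyY hyS
          have hyL : y ∈ insert r L := by
            by_cases hyR : y ∈ R
            · rcases hyR with h | h
              · exact absurd hyY (fun hh => hdisjXY y (h ▸ hzX) hh)
              · exact Or.inr h
            · exact Or.inl (hcollapse y ⟨hyS, hyR⟩)
          rw [starG_nbhd_leaf hzL' hyL]
          exact ⟨z, rfl⟩
    · -- CASE II
      push_neg at hbig
      classical
      have hadjX' : ∀ u v, G.Adj u v → v ∈ Y → u ∈ X :=
        fun u v h hv => hadjXY v u h.symm hv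
      have hx₀r : x₀ ≠ r := fun h => hdisjXY x₀ hx₀X (h ▸ hrY)
      obtain ⟨hx₀adj, hx₀dep⟩ := hpar x₀ hx₀r
      set yp := par x₀ with hypdef
      have hypS : yp ∈ S := hclosed _ hx₀S hx₀r
      have hypY : yp ∈ Y := hadjYX x₀ yp hx₀adj hx₀X
      set CH := chS par r S yp with hCHdef
      have hx₀CH : x₀ ∈ CH := hselfch x₀ hx₀S hx₀r
      have hCHX : ∀ u ∈ CH, u ∈ X := by
        intro u hu
        obtain ⟨huS, hur, hup⟩ := hu
        obtain ⟨huadj, _⟩ := hpar u hur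
        rw [hup] at huadj
        exact hadjX' u yp huadj hypY
      have hCHd : ∀ u ∈ CH, u ∈ S ∧ u ≠ r ∧ d u = d x₀ := by
        intro u hu
        obtain ⟨huS, hur, hup⟩ := hu
        obtain ⟨_, hud⟩ := hpar u hur
        rw [hup] at hud
        exact ⟨huS, hur, by omega⟩
      have hchone : ∀ u ∈ CH, ∃ c, chS par r S u = {c} := by
        intro u hu
        have h1 := hsmooth u (hCHd u hu).1 (hCHX u hu)
        have h2 := hbig u ⟨(hCHd u hu).1, hCHX u hu, (hCHd u hu).2.2⟩
        have hfin' : (chS par r S u).Finite := hfin.subset (hchsub u)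
        rw [← Set.ncard_eq_one]
        have := (Set.ncard_pos hfin').2 h1
        omega
      set lf : V → V := fun u => if h : (chS par r S u).Nonempty then h.some else u
        with hlfdef
      have hlfmem : ∀ u, (chS par r S u).Nonempty → lf u ∈ chS par r S u := by
        intro u h
        rw [hlfdef]
        dsimp only
        rw [dif_pos h]
        exact h.some_mem
      have hlfch : ∀ u ∈ CH, chS par r S u = {lf u} := by
        intro u hu
        obtain ⟨c, hc⟩ := hchone u hu
        have hne : (chS par r S u).Nonempty := by rw [hc]; exact ⟨c, rfl⟩
        have hmem := hlfmem u hne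
        rw [hc] at hmem
        rw [hc, hmem]
      have hlfCH : ∀ u ∈ CH, lf u ∈ chS par r S u := by
        intro u hu
        rw [hlfch u hu]; rfl
      have hlfY : ∀ u ∈ CH, lf u ∈ Y :=
        fun u hu => (hchX u (hCHX u hu) (lf u) (hlfCH u hu)).1
      have hlfd : ∀ u ∈ CH, d (lf u) = d x₀ + 1 := by
        intro u hu
        have := (hchX u (hCHX u hu) (lf u) (hlfCH u hu)).2.2
        have := (hCHd u hu).2.2
        omega
      have hlfS : ∀ u ∈ CH, lf u ∈ S := fun u hu => (hlfCH u hu).1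
      have hlfr : ∀ u ∈ CH, lf u ≠ r := fun u hu => (hlfCH u hu).2.1
      have hlfpar : ∀ u ∈ CH, par (lf u) = u := fun u hu => (hlfCH u hu).2.2
      have hlfyp : ∀ u ∈ CH, lf u ≠ yp := by
        intro u hu h
        have h1 := hlfd u hu
        have h2 := congrArg d h
        omega
      have hOK : SubdivOK yp CH lf := by
        refine ⟨fun h => hdisjXY yp (hCHX yp h) hypY, ?_, hlfyp, ?_, ?_⟩
        · exact fun u hu hc => hdisjXY (lf u) (hCHX _ hc) (hlfY u hu)
        · exact fun u hu h => hdisjXY u (hCHX u hu) (h ▸ hlfY u hu)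
        · intro u hu u' hu' h
          have h1 := hlfpar u hu
          have h2 := hlfpar u' hu'
          rw [h] at h1
          rw [h1] at h2
          exact h2
      have F2' : ∀ u ∈ CH, chS par r S (lf u) = ∅ :=
        fun u hu => F2 u (hCHd u hu).1 (hCHX u hu) (hCHd u hu).2.2 (lf u) (hlfCH u hu)
      set R : Set V := insert yp (CH ∪ lf '' CH) with hRdef
      have hRcases : ∀ w ∈ R, w = yp ∨ w ∈ CH ∨ ∃ u ∈ CH, lf u = w := by
        intro w hw
        rcases hw with h | h | ⟨u, hu, h⟩
        · exact Or.inl h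
        · exact Or.inr (Or.inl h)
        · exact Or.inr (Or.inr ⟨u, hu, h⟩)
      have hypR : yp ∈ R := Or.inl rfl
      have hCHR : ∀ u ∈ CH, u ∈ R := fun u hu => Or.inr (Or.inl hu)
      have hlfR : ∀ u ∈ CH, lf u ∈ R := fun u hu => Or.inr (Or.inr ⟨u, hu, rfl⟩)
      have hRS : ∀ w ∈ R, w ∈ S := by
        intro w hw
        rcases hRcases w hw with rfl | h | ⟨u, hu, rfl⟩
        · exact hypS
        · exact (hCHd w h).1
        · exact hlfS u hu
      have hRmem : ∀ v ∈ S, v ≠ r → par v ∈ R → v ∈ R := by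
        intro v hvS hvr hpv
        rcases hRcases _ hpv with h | h | ⟨u, hu, h⟩
        · have := hselfch v hvS hvr
          rw [h] at this
          exact hCHR v this
        · have hv := hselfch v hvS hvr
          rw [hlfch (par v) h] at hv
          rw [hv]
          exact hlfR (par v) h
        · have hv := hselfch v hvS hvr
          rw [← h, F2' u hu] at hv
          exact absurd hv (by simp)
      have hrCH : r ∉ CH := fun h => h.2.1 rfl
      have hrlf : ∀ u ∈ CH, lf u ≠ r := hlfr
      -- the local covering graph K
      obtain ⟨K, hKedge, hKsupp, hKcov, hKgood⟩ :
          ∃ K : SimpleGraph V,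
            (∀ a b, K.Adj a b → G.Adj a b ∧ a ∈ S ∧ b ∈ S) ∧
            (∀ v, (K.neighborSet v).Nonempty → v ∈ R) ∧
            (∀ y ∈ Y, y ∈ R → (K.neighborSet y).Nonempty) ∧ Pgood K X Y := by
        by_cases hCH2 : 2 ≤ CH.ncard
        · refine ⟨subdivG yp CH lf, ?_, ?_, ?_, subdivG_pgood hOK hCH2 hypY⟩
          · intro a b hab
            rw [subdivG_adj] at hab
            obtain ⟨hne, hab⟩ := hab
            rcases hab with ⟨ha, hb⟩ | ⟨hb, ha⟩ | ⟨ha, hb⟩ | ⟨hb, ha⟩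
            · refine ⟨?_, ?_, hRS b (hCHR b hb)⟩
              · rw [ha]; exact ((hchadj yp b hb).1).symm
              · rw [ha]; exact hypS
            · refine ⟨?_, hRS a (hCHR a ha), ?_⟩
              · rw [hb]; exact (hchadj yp a ha).1
              · rw [hb]; exact hypS
            · refine ⟨?_, hRS a (hCHR a ha), ?_⟩
              · rw [hb]; exact ((hchX a (hCHX a ha) (lf a) (hlfCH a ha)).2.1).symm
              · rw [hb]; exact hlfS a ha
            · refine ⟨?_, ?_, hRS b (hCHR b hb)⟩
              · rw [ha]; exact (hchX b (hCHX b hb) (lf b) (hlfCH b hb)).2.1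
              · rw [ha]; exact hlfS b hb
          · intro v hv
            rcases subdivG_support hOK hv with rfl | h | ⟨u, hu, rfl⟩
            · exact hypR
            · exact hCHR v h
            · exact hlfR u hu
          · intro y hyY hyR
            rcases hRcases y hyR with rfl | h | ⟨u, hu, rfl⟩
            · rw [subdivG_nbhd_center hOK]
              exact ⟨x₀, hx₀CH⟩
            · exact absurd hyY (fun hh => hdisjXY y (hCHX y h) hh)
            · rw [subdivG_nbhd_leaf hOK hu]
              exact ⟨u, rfl⟩
        · -- CH = {x₀}
          have hCH1 : CH = {x₀} := by
            obtain ⟨c, hc⟩ : ∃ c, CH = {c} := by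
              rw [← Set.ncard_eq_one]
              have hfin' : CH.Finite := hfin.subset (hchsub yp)
              have := (Set.ncard_pos hfin').2 ⟨x₀, hx₀CH⟩
              omega
            have hx₀c : x₀ ∈ CH := hx₀CH
            rw [hc] at hx₀c
            have hx₀c' := Set.mem_singleton_iff.1 hx₀c
            rw [hc, hx₀c']
          have hx₀L : x₀ ∉ ({lf x₀, yp} : Set V) := by
            rintro (h | h)
            · exact hdisjXY x₀ hx₀X (h ▸ hlfY x₀ hx₀CH)
            · exact hdisjXY x₀ hx₀X (h ▸ hypY)
          have hL2 : 2 ≤ ({lf x₀, yp} : Set V).ncard := by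
            rw [Set.ncard_pair (hlfyp x₀ hx₀CH)]
          refine ⟨starG x₀ {lf x₀, yp}, ?_, ?_, ?_, starG_pgood hx₀L hL2 hx₀X⟩
          · intro a b hab
            rw [starG_adj] at hab
            obtain ⟨hne, hab⟩ := hab
            rcases hab with ⟨ha, hb⟩ | ⟨hb, ha⟩
            · rcases hb with rfl | rfl
              · refine ⟨?_, ?_, hlfS x₀ hx₀CH⟩
                · rw [ha]; exact ((hchX x₀ hx₀X (lf x₀) (hlfCH x₀ hx₀CH)).2.1).symm
                · rw [ha]; exact hx₀S
              · refine ⟨?_, ?_, hypS⟩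
                · rw [ha]; exact hx₀adj
                · rw [ha]; exact hx₀S
            · rcases ha with rfl | rfl
              · refine ⟨?_, hlfS x₀ hx₀CH, ?_⟩
                · rw [hb]; exact (hchX x₀ hx₀X (lf x₀) (hlfCH x₀ hx₀CH)).2.1
                · rw [hb]; exact hx₀S
              · refine ⟨?_, hypS, ?_⟩
                · rw [hb]; exact hx₀adj.symm
                · rw [hb]; exact hx₀S
          · intro v hv
            rcases starG_support hv with rfl | h | h
            · exact hCHR v hx₀CH
            · exact h ▸ hlfR x₀ hx₀CH
            · exact h ▸ hypR
          · intro y hyY hyR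
            rcases hRcases y hyR with rfl | h | ⟨u, hu, rfl⟩
            · rw [starG_nbhd_leaf hx₀L (Or.inr rfl)]
              exact ⟨x₀, rfl⟩
            · exact absurd hyY (fun hh => hdisjXY y (hCHX y h) hh)
            · rw [hCH1] at hu
              have hux : u = x₀ := Set.mem_singleton_iff.1 hu
              rw [hux, starG_nbhd_leaf hx₀L (Or.inl rfl)]
              exact ⟨x₀, rfl⟩
      by_cases hypr : yp = r
      · -- whole of S is R ; take H := K
        have hSR : ∀ v ∈ S, v ∈ R := by
          by_contra hc
          push_neg at hc
          obtain ⟨v0, hv0S, hv0R⟩ := hc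
          obtain ⟨v, ⟨hvS, hvR⟩, hvmin⟩ := Set.exists_min_image (S \ R) d
            (hfin.subset Set.diff_subset) ⟨v0, hv0S, hv0R⟩
          have hvr : v ≠ r := by
            rintro rfl
            exact hvR (hypr ▸ hypR)
          obtain ⟨_, hvd⟩ := hpar v hvr
          have hpvS : par v ∈ S := hclosed v hvS hvr
          have hpvR : par v ∈ R := by
            by_contra hpvR
            have := hvmin (par v) ⟨hpvS, hpvR⟩
            omega
          exact hvR (hRmem v hvS hvr hpvR)
        exact ⟨K, hKedge, fun y hyY hyS => hKcov y hyY (hSR y hyS), hKgood⟩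
      · -- yp ≠ r : look at the parent of yp
        obtain ⟨hypadj, hypdep⟩ := hpar yp hypr
        set xp := par yp with hxpdef
        have hxpS : xp ∈ S := hclosed _ hypS hypr
        have hxpX : xp ∈ X := hadjXY yp xp hypadj hypY
        have hrR : r ∉ R := by
          intro h
          rcases hRcases r h with h' | h' | ⟨u, hu, h'⟩
          · exact hypr h'.symm
          · exact hrCH h'
          · exact hlfr u hu h'
        have hxpR : xp ∉ R := by
          intro h
          rcases hRcases xp h with h' | h' | ⟨u, hu, h'⟩
          · exact hdisjXY xp hxpX (h' ▸ hypY)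
          · have := (hCHd xp h').2.2
            omega
          · exact hdisjXY xp hxpX (h' ▸ hlfY u hu)
        set S' := S \ R with hS'def
        have hrS' : r ∈ S' := ⟨hrS, hrR⟩
        have hxpS' : xp ∈ S' := ⟨hxpS, hxpR⟩
        have hS'closed : ∀ v ∈ S', v ≠ r → par v ∈ S' := by
          intro v hv hvr
          exact ⟨hclosed v hv.1 hvr, fun h => hv.2 (hRmem v hv.1 hvr h)⟩
        have hchS'eq : ∀ x ∈ S', x ∈ X → x ≠ xp → chS par r S' x = chS par r S x := by
          intro x hx hxX2 hxxp
          ext w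
          simp only [chS, Set.mem_setOf_eq, hS'def, Set.mem_diff]
          constructor
          · rintro ⟨⟨h1, _⟩, h2, h3⟩; exact ⟨h1, h2, h3⟩
          · rintro ⟨h1, h2, h3⟩
            refine ⟨⟨h1, ?_⟩, h2, h3⟩
            intro hw
            rcases hRcases w hw with h' | h' | ⟨u, hu, h'⟩
            · rw [h'] at h3
              exact hxxp h3.symm
            · obtain ⟨_, _, h''⟩ := h'
              rw [h''] at h3
              exact hdisjXY x hxX2 (h3 ▸ hypY)
            · rw [← h'] at h3
              rw [hlfpar u hu] at h3
              exact hx.2 (hCHR x (h3 ▸ hu))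
        have hchS'xp : chS par r S' xp = chS par r S xp \ {yp} := by
          ext w
          simp only [chS, Set.mem_setOf_eq, hS'def, Set.mem_diff,
            Set.mem_singleton_iff]
          constructor
          · rintro ⟨⟨h1, hw⟩, h2, h3⟩
            exact ⟨⟨h1, h2, h3⟩, fun h => hw (h ▸ hypR)⟩
          · rintro ⟨⟨h1, h2, h3⟩, hwyp⟩
            refine ⟨⟨h1, ?_⟩, h2, h3⟩
            intro hw
            rcases hRcases w hw with h' | h' | ⟨u, hu, h'⟩
            · exact hwyp h'
            · obtain ⟨_, _, h''⟩ := h'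
              rw [h''] at h3
              exact hdisjXY xp hxpX (h3 ▸ hypY)
            · rw [← h'] at h3
              rw [hlfpar u hu] at h3
              exact hxpR (hCHR xp (h3 ▸ hu))
        have hS'fin : S'.Finite := hfin.subset Set.diff_subset
        have hS'lt : S'.ncard < S.ncard :=
          Set.ncard_lt_ncard ⟨Set.diff_subset, fun hsub => (hsub hypS).2 hypR⟩ hfin
        have hKdisj : ∀ (H' : SimpleGraph V),
            (∀ a b, H'.Adj a b → G.Adj a b ∧ a ∈ S' ∧ b ∈ S') →
            ∀ v, (H'.neighborSet v).Nonempty → ((K).neighborSet v).Nonempty → False := by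
          intro H' hedge v ⟨b, hb⟩ hv2
          exact ((hedge v b hb).2.1).2 (hKsupp v hv2)
        by_cases hxpch : (chS par r S xp \ {yp}).Nonempty
        · -- recurse on S'
          obtain ⟨H', hH'edge, hH'cov, hH'good⟩ := IH S' hS'fin (by omega) hrS' hS'closed
            (by
              intro x hx hxX2
              by_cases hxxp : x = xp
              · rw [hxxp, hchS'xp]
                exact hxpch
              · rw [hchS'eq x hx hxX2 hxxp]
                exact hsmooth x hx.1 hxX2)
            (by
              obtain ⟨w, hw⟩ := hxpch
              have hw' : w ∈ chS par r S' xp := by rw [hchS'xp]; exact hw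
              exact ⟨w, (hchX xp hxpX w hw.1).1, hw'.1, hw'.2.1⟩)
          have hdisj := hKdisj H' (fun a b h => by
            obtain ⟨h1, h2, h3⟩ := hH'edge a b h
            exact ⟨h1, h2, h3⟩)
          refine ⟨H' ⊔ K, ?_, ?_, pgood_sup hdisj hH'good hKgood⟩
          · intro a b hab
            rcases hab with hab | hab
            · obtain ⟨h1, h2, h3⟩ := hH'edge a b hab
              exact ⟨h1, h2.1, h3.1⟩
            · exact hKedge a b hab
          · intro y hyY hyS
            rw [nbhd_sup]
            by_cases hyR : y ∈ R
            · exact Set.Nonempty.mono Set.subset_union_right (hKcov y hyY hyR)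
            · exact Set.Nonempty.mono Set.subset_union_left (hH'cov y hyY ⟨hyS, hyR⟩)
        · -- xp has no other child : remove xp as well
          have hxpone : chS par r S xp ⊆ {yp} := by
            intro w hw
            by_contra hwyp
            exact hxpch ⟨w, hw, hwyp⟩
          set S'' := S' \ {xp} with hS''def
          have hrS'' : r ∈ S'' := ⟨hrS', fun h => hdisjXY r (h ▸ hxpX) hrY⟩
          have hS''closed : ∀ v ∈ S'', v ≠ r → par v ∈ S'' := by
            intro v hv hvr
            refine ⟨hS'closed v hv.1 hvr, ?_⟩
            intro h
            rw [Set.mem_singleton_iff] at h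
            have hvch := hselfch v hv.1.1 hvr
            rw [h] at hvch
            have := hxpone hvch
            rw [Set.mem_singleton_iff] at this
            rw [this] at hv
            exact hv.1.2 hypR
          have hchS''eq : ∀ x ∈ S'', x ∈ X → chS par r S'' x = chS par r S x := by
            intro x hx hxX2
            have hxxp : x ≠ xp := fun h => (h ▸ hx).2 rfl
            rw [← hchS'eq x hx.1 hxX2 hxxp]
            ext w
            simp only [chS, Set.mem_setOf_eq, hS''def, Set.mem_diff,
              Set.mem_singleton_iff]
            constructor
            · rintro ⟨⟨h1, _⟩, h2, h3⟩; exact ⟨h1, h2, h3⟩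
            · rintro ⟨h1, h2, h3⟩
              refine ⟨⟨h1, ?_⟩, h2, h3⟩
              intro hwxp
              rw [hwxp] at h3
              have : par xp ∈ Y := hadjYX xp (par xp) (hpar xp (fun hh =>
                hdisjXY xp hxpX (hh ▸ hrY))).1 hxpX
              rw [h3] at this
              exact hdisjXY x hxX2 this
          have hS''fin : S''.Finite := hS'fin.subset Set.diff_subset
          have hS''lt : S''.ncard < S.ncard := by
            have : S''.ncard ≤ S'.ncard :=
              Set.ncard_le_ncard Set.diff_subset hS'fin
            omega
          by_cases hY2'' : ∃ y, y ∈ Y ∧ y ∈ S'' ∧ y ≠ r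
          · obtain ⟨H'', hH''edge, hH''cov, hH''good⟩ := IH S'' hS''fin (by omega) hrS''
              hS''closed
              (by
                intro x hx hxX2
                rw [hchS''eq x hx hxX2]
                exact hsmooth x hx.1.1 hxX2)
              hY2''
            have hdisj := hKdisj H'' (fun a b h => by
              obtain ⟨h1, h2, h3⟩ := hH''edge a b h
              exact ⟨h1, h2.1, h3.1⟩)
            refine ⟨H'' ⊔ K, ?_, ?_, pgood_sup hdisj hH''good hKgood⟩
            · intro a b hab
              rcases hab with hab | hab
              · obtain ⟨h1, h2, h3⟩ := hH''edge a b hab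
                exact ⟨h1, h2.1.1, h3.1.1⟩
              · exact hKedge a b hab
            · intro y hyY hyS
              rw [nbhd_sup]
              by_cases hyR : y ∈ R
              · exact Set.Nonempty.mono Set.subset_union_right (hKcov y hyY hyR)
              · refine Set.Nonempty.mono Set.subset_union_left
                  (hH''cov y hyY ⟨⟨hyS, hyR⟩, ?_⟩)
                exact fun h => hdisjXY y (h ▸ hxpX) hyY
          · -- terminal : subdivided star with the extra branch through xp
            push_neg at hY2''
            have hcollapse : ∀ v ∈ S'', v = r := by
              intro v hv
              rcases hXorY v with hvX | hvY
              · exfalso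
                have hne : (chS par r S'' v).Nonempty := by
                  rw [hchS''eq v hv hvX]
                  exact hsmooth v hv.1.1 hvX
                obtain ⟨w, hwS'', hwr, hwpar⟩ := hne
                have hwY : w ∈ Y := (hchX v hvX w ⟨hwS''.1.1, hwr, hwpar⟩).1
                exact hwr (hY2'' w hwY hwS'')
              · exact hY2'' v hvY hv
            have hxpr : xp ≠ r := fun h => hdisjXY xp hxpX (h ▸ hrY)
            obtain ⟨hxpadj, hxpdep⟩ := hpar xp hxpr
            have hpxpS : par xp ∈ S := hclosed _ hxpS hxpr
            have hpxpY : par xp ∈ Y := hadjYX xp (par xp) hxpadj hxpX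
            have hpxpR : par xp ∉ R := by
              intro h
              rcases hRcases _ h with h' | h' | ⟨u, hu, h'⟩
              · rw [h'] at hxpdep
                omega
              · exact hdisjXY (par xp) (hCHX _ h') hpxpY
              · have := hselfch xp hxpS hxpr
                rw [← h', F2' u hu] at this
                exact absurd this (by simp)
            have hpxpr : par xp = r := by
              refine hcollapse (par xp) ⟨⟨hpxpS, hpxpR⟩, ?_⟩
              exact fun h => hdisjXY xp hxpX (Set.mem_singleton_iff.1 h ▸ hpxpY)
            have hadjxpr : G.Adj xp r := by rw [← hpxpr]; exact hxpadj
            have hxpCH : xp ∉ CH := fun h => hxpR (hCHR xp h)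
            set B : Set V := insert xp CH with hBdef
            set lf' : V → V := fun u => if u = xp then r else lf u with hlf'def
            have hlf'xp : lf' xp = r := by rw [hlf'def]; simp
            have hlf'CH : ∀ u ∈ CH, lf' u = lf u := by
              intro u hu
              rw [hlf'def]
              simp only
              rw [if_neg (fun h => hxpCH (by rw [← h]; exact hu))]
            have hBX : ∀ u ∈ B, u ∈ X := by
              rintro u (rfl | hu)
              · exact hxpX
              · exact hCHX u hu
            have hOK' : SubdivOK yp B lf' := by
              refine ⟨fun h => hdisjXY yp (hBX yp h) hypY, ?_, ?_, ?_, ?_⟩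
              · rintro u (rfl | hu)
                · rw [hlf'xp]
                  exact fun h => hdisjXY r (hBX r h) hrY
                · rw [hlf'CH u hu]
                  exact fun h => hdisjXY (lf u) (hBX _ h) (hlfY u hu)
              · rintro u (rfl | hu)
                · rw [hlf'xp]
                  exact fun h => hypr h.symm
                · rw [hlf'CH u hu]
                  exact hlfyp u hu
              · rintro u (rfl | hu)
                · rw [hlf'xp]
                  exact fun h => hdisjXY xp hxpX (h ▸ hrY)
                · rw [hlf'CH u hu]
                  exact fun h => hdisjXY u (hCHX u hu) (h ▸ hlfY u hu)
              · rintro u (rfl | hu) u' (rfl | hu') h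
                · rfl
                · rw [hlf'xp, hlf'CH u' hu'] at h
                  exact absurd h.symm (hlfr u' hu')
                · rw [hlf'xp, hlf'CH u hu] at h
                  exact absurd h (hlfr u hu)
                · rw [hlf'CH u hu, hlf'CH u' hu'] at h
                  exact hOK.hinj u hu u' hu' h
            have hB2 : 2 ≤ B.ncard := by
              have hCHfin : CH.Finite := hfin.subset (hchsub yp)
              rw [hBdef, Set.ncard_insert_of_notMem hxpCH hCHfin]
              have := (Set.ncard_pos hCHfin).2 ⟨x₀, hx₀CH⟩
              omega
            refine ⟨subdivG yp B lf', ?_, ?_, subdivG_pgood hOK' hB2 hypY⟩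
            · intro a b hab
              rw [subdivG_adj] at hab
              obtain ⟨hne, hab⟩ := hab
              rcases hab with ⟨ha, hb⟩ | ⟨hb, ha⟩ | ⟨ha, hb⟩ | ⟨hb, ha⟩
              · rcases hb with rfl | hb
                · refine ⟨?_, ?_, hxpS⟩
                  · rw [ha]; exact hypadj
                  · rw [ha]; exact hypS
                · refine ⟨?_, ?_, hRS b (hCHR b hb)⟩
                  · rw [ha]; exact ((hchadj yp b hb).1).symm
                  · rw [ha]; exact hypS
              · rcases ha with rfl | ha
                · refine ⟨?_, hxpS, ?_⟩
                  · rw [hb]; exact hypadj.symm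
                  · rw [hb]; exact hypS
                · refine ⟨?_, hRS a (hCHR a ha), ?_⟩
                  · rw [hb]; exact (hchadj yp a ha).1
                  · rw [hb]; exact hypS
              · rcases ha with rfl | ha
                · rw [hlf'xp] at hb
                  refine ⟨?_, hxpS, ?_⟩
                  · rw [hb]; exact hadjxpr
                  · rw [hb]; exact hrS
                · rw [hlf'CH a ha] at hb
                  refine ⟨?_, hRS a (hCHR a ha), ?_⟩
                  · rw [hb]; exact ((hchX a (hCHX a ha) (lf a) (hlfCH a ha)).2.1).symm
                  · rw [hb]; exact hlfS a ha
              · rcases hb with rfl | hb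
                · rw [hlf'xp] at ha
                  refine ⟨?_, ?_, hxpS⟩
                  · rw [ha]; exact hadjxpr.symm
                  · rw [ha]; exact hrS
                · rw [hlf'CH b hb] at ha
                  refine ⟨?_, ?_, hRS b (hCHR b hb)⟩
                  · rw [ha]; exact (hchX b (hCHX b hb) (lf b) (hlfCH b hb)).2.1
                  · rw [ha]; exact hlfS b hb
            · intro y hyY hyS
              by_cases hyR : y ∈ R
              · rcases hRcases y hyR with rfl | h | ⟨u, hu, rfl⟩
                · rw [subdivG_nbhd_center hOK']
                  exact ⟨x₀, Or.inr hx₀CH⟩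
                · exact absurd hyY (fun hh => hdisjXY y (hCHX y h) hh)
                · have : lf u = lf' u := (hlf'CH u hu).symm
                  rw [this, subdivG_nbhd_leaf hOK' (Set.mem_insert_of_mem xp hu)]
                  exact ⟨u, rfl⟩
              · have hyxp : y ≠ xp := fun h => hdisjXY y (h ▸ hxpX) hyY
                have : y = r := hcollapse y ⟨⟨hyS, hyR⟩, hyxp⟩
                rw [this, ← hlf'xp,
                  subdivG_nbhd_leaf hOK' (Set.mem_insert xp CH)]
                exact ⟨xp, rfl⟩

end AuxE

theorem stmt2 {V : Type*} (G : SimpleGraph V) (X Y : Set V)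
    (hpart : ∀ v, (v ∈ X ∧ v ∉ Y) ∨ (v ∈ Y ∧ v ∉ X))
    (hbip : ∀ u v, G.Adj u v → (u ∈ X ∧ v ∈ Y) ∨ (u ∈ Y ∧ v ∈ X))
    (hconn : G.Connected) (h2 : 2 ≤ G.edgeSet.ncard)
    (hnostar : ¬ ∃ y ∈ Y, ∀ e ∈ G.edgeSet, y ∈ e) :
    ∃ H : SimpleGraph V, H ≤ G ∧ (∀ y ∈ Y, (H.neighborSet y).Nonempty) ∧
      ∀ C : H.ConnectedComponent, (∃ v ∈ C.supp, (H.neighborSet v).Nonempty) →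
        (∃ x ∈ X, IsNontrivialStarComp H C.supp x) ∨
        (∃ y ∈ Y, IsNontrivialSubdividedStarComp H C.supp y) := by
  classical
  -- there is an edge
  have hEfin : G.edgeSet.Finite := Set.finite_of_ncard_ne_zero (by omega)
  have hEne : G.edgeSet.Nonempty := Set.nonempty_of_ncard_ne_zero (by omega)
  obtain ⟨e₀, he₀⟩ := hEne
  obtain ⟨a₀, b₀⟩ := e₀
  rw [SimpleGraph.mem_edgeSet] at he₀
  -- every vertex has a neighbour
  have hnbr : ∀ v : V, ∃ w, G.Adj v w := by
    intro v
    rcases eq_or_ne v a₀ with rfl | hva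
    · exact ⟨b₀, he₀⟩
    · obtain ⟨p⟩ := hconn v a₀
      cases p with
      | nil => exact absurd rfl hva
      | cons h _ => exact ⟨_, h⟩
  -- V is finite
  have hVfin : (Set.univ : Set V).Finite := by
    have hsub : (Set.univ : Set V) ⊆ ⋃ e ∈ G.edgeSet, {v | v ∈ e} := by
      intro v _
      obtain ⟨w, hw⟩ := hnbr v
      exact Set.mem_biUnion (G.mem_edgeSet.2 hw) (Sym2.mem_mk_left v w)
    refine Set.Finite.subset (hEfin.biUnion ?_) hsub
    intro e _
    obtain ⟨x, y⟩ := e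
    have : {v | v ∈ s(x, y)} = {x, y} := by
      ext v; simp [Sym2.mem_iff]
    rw [this]
    exact (Set.finite_singleton y).insert x
  -- two distinct vertices of Y
  have hY2 : ∃ y₀ y₁, y₀ ∈ Y ∧ y₁ ∈ Y ∧ y₀ ≠ y₁ := by
    have hYedge : ∀ u v, G.Adj u v → u ∈ Y ∨ v ∈ Y := by
      intro u v h
      rcases hbip u v h with ⟨_, h2'⟩ | ⟨h1', _⟩
      · exact Or.inr h2'
      · exact Or.inl h1'
    by_contra hc
    push_neg at hc
    have hy₀ : ∃ y₀, y₀ ∈ Y := by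
      rcases hYedge a₀ b₀ he₀ with h | h
      · exact ⟨a₀, h⟩
      · exact ⟨b₀, h⟩
    obtain ⟨y₀, hy₀Y⟩ := hy₀
    refine hnostar ⟨y₀, hy₀Y, ?_⟩
    intro e he
    obtain ⟨a, b⟩ := e
    rw [SimpleGraph.mem_edgeSet] at he
    rcases hYedge a b he with h | h
    · have : y₀ = a := by
        by_contra hne
        exact hne (hc y₀ a hy₀Y h)
      rw [this]; exact Sym2.mem_mk_left a b
    · have : y₀ = b := by
        by_contra hne
        exact hne (hc y₀ b hy₀Y h)
      rw [this]; exact Sym2.mem_mk_right a b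
  obtain ⟨r, y₁, hrY, hy₁Y, hry₁⟩ := hY2
  -- BFS parent structure
  have hparex : ∀ v : V, v ≠ r → ∃ u, G.Adj v u ∧ G.dist r u + 1 = G.dist r v := by
    intro v hv
    obtain ⟨p, hp⟩ := (hconn v r).exists_walk_length_eq_dist
    cases p with
    | nil => exact absurd rfl hv
    | @cons _ u _ h q =>
      refine ⟨u, h, ?_⟩
      have hql : q.length + 1 = G.dist v r := by
        simpa using hp
      have h1 : G.dist u r ≤ q.length := SimpleGraph.dist_le q
      have h2 : G.dist v r ≤ G.dist u r + 1 := by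
        have := SimpleGraph.Connected.dist_triangle hconn (u := v) (v := u) (w := r)
        have hd1 : G.dist v u ≤ 1 := by
          have := SimpleGraph.dist_le (SimpleGraph.Walk.cons h SimpleGraph.Walk.nil : G.Walk v u)
          simpa using this
        omega
      have hc1 : G.dist r u = G.dist u r := SimpleGraph.dist_comm ..
      have hc2 : G.dist r v = G.dist v r := SimpleGraph.dist_comm ..
      omega
  set d : V → ℕ := fun v => G.dist r v with hd
  set par : V → V := fun v => if h : v = r then r else (hparex v h).choose with hpardef
  have hpar : ∀ v, v ≠ r → G.Adj v (par v) ∧ d (par v) + 1 = d v := by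
    intro v hv
    have : par v = (hparex v hv).choose := by rw [hpardef]; simp [hv]
    rw [this]
    exact (hparex v hv).choose_spec
  -- the smoothed vertex set
  set S₀ : Set V := {v | v ∈ Y ∨ (chS par r Set.univ v).Nonempty} with hS₀def
  have hYS₀ : ∀ y ∈ Y, y ∈ S₀ := fun y hy => Or.inl hy
  obtain ⟨H, hHedge, hHcov, hHgood⟩ := mainInd G X Y r par d hpart hbip hrY hpar
    S₀.ncard S₀ (hVfin.subset (Set.subset_univ _)) le_rfl (hYS₀ r hrY)
    (by
      intro v hv hvr
      exact Or.inr ⟨v, Set.mem_univ v, hvr, rfl⟩)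
    (by
      intro x hxS hxX
      have hxY : x ∉ Y := by
        rcases hpart x with ⟨_, h⟩ | ⟨h, _⟩
        · exact h
        · exact absurd hxX (by rcases hpart x with ⟨_, _⟩ | ⟨_, hh⟩ <;> simp_all)
      have hne : (chS par r Set.univ x).Nonempty := by
        rcases hxS with h | h
        · exact absurd h hxY
        · exact h
      obtain ⟨w, hwu, hwr, hwp⟩ := hne
      have hwY : w ∈ Y := by
        have hadj : G.Adj w x := by
          have := (hpar w hwr).1
          rwa [hwp] at this
        rcases hbip w x hadj with ⟨h1, _⟩ | ⟨h1, _⟩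
        · exact absurd hxX (by rcases hpart x with ⟨_, _⟩ | ⟨_, hh⟩ <;> simp_all)
        · exact h1
      exact ⟨w, hYS₀ w hwY, hwr, hwp⟩)
    ⟨y₁, hy₁Y, hYS₀ y₁ hy₁Y, fun h => hry₁ h.symm⟩
  exact ⟨H, fun a b hab => (hHedge a b hab).1,
    fun y hy => hHcov y hy (hYS₀ y hy), pgood_components hHgood⟩
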